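/- arXiv:1705.08614 — 2 statements merged into one kernel-verified Lean document; each statement's English description precedes it below -/
import Mathlib

section
/- Let V and W be real inner product spaces. Let z, r_mu, r1 be elements of V, let dd, rd be elements of W, let s0, sT ≥ 0 and κ > 0 be real numbers, and let P be a real number with |P| ≤ κ‖r1‖‖dd‖. Assume the identity ‖dd‖² + ‖z‖² + sT/2 = s0/2 + ⟨r_mu, z⟩ + P + ⟨rd, dd⟩. Then for every ν ∈ (0,2], every γ ≥ 1/2, and all α₁, α₂ > 0 with 1/α₁ + 1/α₂ = ν, one has (2−ν)‖dd‖² + (2 − 1/γ)‖z‖² + sT ≤ s0 + γ‖r_mu‖² + α₁‖rd‖² + α₂ κ² ‖r1‖². -/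
open scoped RealInnerProductSpace

private lemma young_aux (a b c : ℝ) (hc : 0 < c) : 2 * (a * b) ≤ c * a ^ 2 + (1 / c) * b ^ 2 := by
  have h : c * a ^ 2 + (1 / c) * b ^ 2 - 2 * (a * b) = (c * a - b) ^ 2 / c := by
    field_simp; ring
  have := div_nonneg (sq_nonneg (c * a - b)) hc.le
  linarith

/-- Abstract inner-product-space core of Theorem 1(a): from the error identity and the
Friedrichs-type bound on the pairing `P`, the weighted majorant bound follows. -/
theorem abstract_majorant_bound
    {V W : Type*} [NormedAddCommGroup V] [InnerProductSpace ℝ V]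
    [NormedAddCommGroup W] [InnerProductSpace ℝ W]
    (z r_mu r1 : V) (dd rd : W)
    (s0 sT κ P : ℝ) (hs0 : 0 ≤ s0) (hsT : 0 ≤ sT) (hκ : 0 < κ)
    (hP : |P| ≤ κ * ‖r1‖ * ‖dd‖)
    (hid : ‖dd‖ ^ 2 + ‖z‖ ^ 2 + sT / 2 = s0 / 2 + ⟪r_mu, z⟫ + P + ⟪rd, dd⟫) :
    ∀ ν ∈ Set.Ioc (0 : ℝ) 2, ∀ γ : ℝ, 1 / 2 ≤ γ →
    ∀ α₁ α₂ : ℝ, 0 < α₁ → 0 < α₂ → 1 / α₁ + 1 / α₂ = ν →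
      (2 - ν) * ‖dd‖ ^ 2 + (2 - 1 / γ) * ‖z‖ ^ 2 + sT
        ≤ s0 + γ * ‖r_mu‖ ^ 2 + α₁ * ‖rd‖ ^ 2 + α₂ * κ ^ 2 * ‖r1‖ ^ 2 := by
  intro ν hν γ hγ α₁ α₂ hα₁ hα₂ hsum
  have hγ0 : (0 : ℝ) < γ := lt_of_lt_of_le (by norm_num) hγ
  have h1 : ⟪r_mu, z⟫ ≤ ‖r_mu‖ * ‖z‖ := real_inner_le_norm _ _
  have h2 : ⟪rd, dd⟫ ≤ ‖rd‖ * ‖dd‖ := real_inner_le_norm _ _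
  have h3 : P ≤ κ * ‖r1‖ * ‖dd‖ := le_of_abs_le hP
  have y1 := young_aux ‖r_mu‖ ‖z‖ γ hγ0
  have y2 := young_aux ‖rd‖ ‖dd‖ α₁ hα₁
  have y3 := young_aux (κ * ‖r1‖) ‖dd‖ α₂ hα₂
  have hk : α₂ * (κ * ‖r1‖) ^ 2 = α₂ * κ ^ 2 * ‖r1‖ ^ 2 := by ring
  nlinarith [y1, y2, y3, h1, h2, h3, hid, hsum]
end

section
/- Let u be a classical solution of σ u_t − div_x(A∇ₓu) + b·∇ₓu + c u = f in Q with u = u_D on Σ, and let v be smooth on cl(Q) with v = u_D on Σ and v(·,0) = u₀ = u(·,0) (so e := u − v satisfies e(·,0) = 0). Suppose the exact flux A∇ₓu is C¹ in the spatial variables. Then pointwise on Q: R_d(v, A∇ₓu) = A∇ₓe and R_eq(v, A∇ₓu) = σ e_t + c e + b·∇ₓe; consequently, for the parameter choice ν = 1, γ = 1, μ ≡ 0 and any α₁, α₂ > 0 with 1/α₁ + 1/α₂ = 1, the majorant satisfies Maj(v, A∇ₓu; 1, 1, 0, α₁, α₂) = ∫_0^T ( α₁‖∇ₓe‖²_{A,Ω}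 + α₂·(C_F²/ν_A)·‖σ e_t + c e + b·∇ₓe‖²_Ω ) dt. -/
open MeasureTheory Set Matrix

noncomputable section

/-- Open axis-parallel box in `ℝᵈ` with corners `a₀`, `a₁`. -/
def box {d : ℕ} (a₀ a₁ : Fin d → ℝ) : Set (Fin d → ℝ) :=
  {x | ∀ i, x i ∈ Set.Ioo (a₀ i) (a₁ i)}

/-- Gradient of a scalar field on `ℝᵈ`. -/
def grads {d : ℕ} (w : (Fin d → ℝ) → ℝ) (x : Fin d → ℝ) : Fin d → ℝ :=
  fun i => fderiv ℝ w x (Pi.single i 1)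

/-- Spatial gradient `∇ₓw` of a time-dependent scalar field. -/
def gradx {d : ℕ} (w : (Fin d → ℝ) → ℝ → ℝ) (x : Fin d → ℝ) (t : ℝ) : Fin d → ℝ :=
  fun i => fderiv ℝ (fun z => w z t) x (Pi.single i 1)

/-- Spatial divergence `div_x y` of a time-dependent vector field. -/
def divx {d : ℕ} (y : (Fin d → ℝ) → ℝ → Fin d → ℝ) (x : Fin d → ℝ) (t : ℝ) : ℝ :=
  ∑ i, fderiv ℝ (fun z => y z t i) x (Pi.single i 1)

/-- Divergence of a static vector field on `ℝᵈ`. -/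
def divv {d : ℕ} (bb : (Fin d → ℝ) → Fin d → ℝ) (x : Fin d → ℝ) : ℝ :=
  ∑ i, fderiv ℝ (fun z => bb z i) x (Pi.single i 1)

/-- Time derivative `∂ₜw` of a time-dependent scalar field. -/
def tderiv {d : ℕ} (w : (Fin d → ℝ) → ℝ → ℝ) (x : Fin d → ℝ) (t : ℝ) : ℝ :=
  deriv (w x) t

/-- Equation residual `R_eq(v,y) = f + div_x y − σ v_t − c v − b·∇ₓv`. -/
def Req {d : ℕ} (σ : ℝ) (bb : (Fin d → ℝ) → Fin d → ℝ) (c : (Fin d → ℝ) → ℝ)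
    (f v : (Fin d → ℝ) → ℝ → ℝ) (y : (Fin d → ℝ) → ℝ → Fin d → ℝ)
    (x : Fin d → ℝ) (t : ℝ) : ℝ :=
  f x t + divx y x t - σ * tderiv v x t - c x * v x t - bb x ⬝ᵥ gradx v x t

/-- Flux residual `R_d(v,y) = y − A∇ₓv`. -/
def Rd {d : ℕ} (A : (Fin d → ℝ) → Matrix (Fin d) (Fin d) ℝ)
    (v : (Fin d → ℝ) → ℝ → ℝ) (y : (Fin d → ℝ) → ℝ → Fin d → ℝ)
    (x : Fin d → ℝ) (t : ℝ) : Fin d → ℝ :=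
  y x t - (A x).mulVec (gradx v x t)

/-- The functional majorant
`Maj(v,y;γ,μ,α₁,α₂) = σ‖u₀ − v(·,0)‖²_Ω + ∫₀ᵀ ( γ‖(1/δ)μR_eq‖²_Ω + α₁‖R_d‖²_{A⁻¹,Ω}
  + α₂ (C_F²/ν_A) ‖(1−μ)R_eq‖²_Ω ) dt`, with `δ² = c − (1/2)div_x b`. -/
def Maj {d : ℕ} (T : ℝ) (a₀ a₁ : Fin d → ℝ)
    (A : (Fin d → ℝ) → Matrix (Fin d) (Fin d) ℝ) (σ : ℝ)
    (bb : (Fin d → ℝ) → Fin d → ℝ) (c : (Fin d → ℝ) → ℝ)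
    (f : (Fin d → ℝ) → ℝ → ℝ) (u₀ : (Fin d → ℝ) → ℝ) (CF νA : ℝ)
    (v : (Fin d → ℝ) → ℝ → ℝ) (y : (Fin d → ℝ) → ℝ → Fin d → ℝ)
    (γ : ℝ) (μ : (Fin d → ℝ) → ℝ) (α₁ α₂ : ℝ) : ℝ :=
  σ * (∫ x in box a₀ a₁, (u₀ x - v x 0) ^ 2)
  + ∫ t in (0 : ℝ)..T,
      (γ * ∫ x in box a₀ a₁,
          (μ x * Req σ bb c f v y x t) ^ 2 / (c x - (1 / 2) * divv bb x))
      + (α₁ * ∫ x in box a₀ a₁,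
          (A x)⁻¹.mulVec (Rd A v y x t) ⬝ᵥ Rd A v y x t)
      + α₂ * (CF ^ 2 / νA) * ∫ x in box a₀ a₁,
          ((1 - μ x) * Req σ bb c f v y x t) ^ 2

/-- Remark of Section 2 of the paper: with the exact flux `y = A∇ₓu`, the residuals become
`R_d = A∇ₓe` and `R_eq = σe_t + ce + b·∇ₓe`, and for `ν = γ = 1`, `μ ≡ 0`, the majorant
equals `∫₀ᵀ ( α₁‖∇ₓe‖²_{A,Ω} + α₂(C_F²/ν_A)‖σe_t + ce + b·∇ₓe‖²_Ω ) dt`,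
quantifying the irremovable gap between the error and the majorant. -/
theorem majorant_gap_with_exact_flux
    {d : ℕ} (hd : d ∈ ({1, 2, 3} : Set ℕ))
    (a₀ a₁ : Fin d → ℝ) (hbox : ∀ i, a₀ i < a₁ i)
    (T : ℝ) (hT : 0 < T)
    (A : (Fin d → ℝ) → Matrix (Fin d) (Fin d) ℝ)
    (νA νA' : ℝ) (hνA : 0 < νA) (hνA' : νA ≤ νA') (hAc : Continuous A)
    (hAsymm : ∀ x ∈ box a₀ a₁, (A x).IsSymm)
    (hAell : ∀ x ∈ box a₀ a₁, ∀ ξ : Fin d → ℝ,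
      νA * (ξ ⬝ᵥ ξ) ≤ (A x).mulVec ξ ⬝ᵥ ξ ∧ (A x).mulVec ξ ⬝ᵥ ξ ≤ νA' * (ξ ⬝ᵥ ξ))
    (σ : ℝ) (hσ : 0 < σ)
    (bb : (Fin d → ℝ) → Fin d → ℝ) (hbb : ContDiff ℝ 1 bb)
    (c : (Fin d → ℝ) → ℝ) (hc : Continuous c)
    (δ₀ : ℝ) (hδ₀ : 0 < δ₀)
    (hδ : ∀ x ∈ box a₀ a₁, δ₀ ≤ c x - (1 / 2) * divv bb x)
    (CF : ℝ) (hCF : 0 < CF)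
    (f uD u v : (Fin d → ℝ) → ℝ → ℝ) (u₀ : (Fin d → ℝ) → ℝ)
    (hf : Continuous fun p : (Fin d → ℝ) × ℝ => f p.1 p.2)
    (hu : ContDiff ℝ 2 fun p : (Fin d → ℝ) × ℝ => u p.1 p.2)
    (hv : ContDiff ℝ 2 fun p : (Fin d → ℝ) × ℝ => v p.1 p.2)
    (hpde : ∀ x ∈ box a₀ a₁, ∀ t ∈ Set.Ioo 0 T,
      σ * tderiv u x t - divx (fun z s => (A z).mulVec (gradx u z s)) x t
        + bb x ⬝ᵥ gradx u x t + c x * u x t = f x t)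
    (huD : ∀ x ∈ frontier (box a₀ a₁), ∀ t ∈ Set.Ioo 0 T, u x t = uD x t)
    (hvD : ∀ x ∈ frontier (box a₀ a₁), ∀ t ∈ Set.Ioo 0 T, v x t = uD x t)
    (huIC : ∀ x ∈ box a₀ a₁, u x 0 = u₀ x)
    (hvIC : ∀ x ∈ box a₀ a₁, v x 0 = u₀ x)
    (hflux : ∀ t : ℝ, ContDiff ℝ 1 fun z => (A z).mulVec (gradx u z t)) :
    (∀ x ∈ box a₀ a₁, ∀ t ∈ Set.Ioo 0 T,
      Rd A v (fun z s => (A z).mulVec (gradx u z s)) x t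
        = (A x).mulVec (gradx (fun z s => u z s - v z s) x t)
      ∧ Req σ bb c f v (fun z s => (A z).mulVec (gradx u z s)) x t
        = σ * tderiv (fun z s => u z s - v z s) x t + c x * (u x t - v x t)
          + bb x ⬝ᵥ gradx (fun z s => u z s - v z s) x t)
    ∧ ∀ α₁ α₂ : ℝ, 0 < α₁ → 0 < α₂ → 1 / α₁ + 1 / α₂ = 1 →
        Maj T a₀ a₁ A σ bb c f u₀ CF νA v (fun z s => (A z).mulVec (gradx u z s))
            1 (fun _ => 0) α₁ α₂
          = ∫ t in (0 : ℝ)..T,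
              (α₁ * ∫ x in box a₀ a₁,
                (A x).mulVec (gradx (fun z s => u z s - v z s) x t)
                  ⬝ᵥ gradx (fun z s => u z s - v z s) x t)
              + α₂ * (CF ^ 2 / νA) * ∫ x in box a₀ a₁,
                  (σ * tderiv (fun z s => u z s - v z s) x t + c x * (u x t - v x t)
                    + bb x ⬝ᵥ gradx (fun z s => u z s - v z s) x t) ^ 2 := by
  -- abbreviations
  have hud : Differentiable ℝ fun p : (Fin d → ℝ) × ℝ => u p.1 p.2 :=
    hu.differentiable two_ne_zero
  have hvd : Differentiable ℝ fun p : (Fin d → ℝ) × ℝ => v p.1 p.2 :=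
    hv.differentiable two_ne_zero
  have hxu : ∀ (t : ℝ) (x : Fin d → ℝ), DifferentiableAt ℝ (fun z => u z t) x := fun t x =>
    by have h := (hud (x, t)).comp x ((differentiableAt_id (𝕜 := ℝ) (x := x)).prodMk (differentiableAt_const t)); exact h
  have hxv : ∀ (t : ℝ) (x : Fin d → ℝ), DifferentiableAt ℝ (fun z => v z t) x := fun t x =>
    by have h := (hvd (x, t)).comp x ((differentiableAt_id (𝕜 := ℝ) (x := x)).prodMk (differentiableAt_const t)); exact h
  have htu : ∀ (x : Fin d → ℝ) (t : ℝ), DifferentiableAt ℝ (u x) t := fun x t =>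
    by have h := (hud (x, t)).comp t ((differentiableAt_const x).prodMk differentiableAt_id); exact h
  have htv : ∀ (x : Fin d → ℝ) (t : ℝ), DifferentiableAt ℝ (v x) t := fun x t =>
    by have h := (hvd (x, t)).comp t ((differentiableAt_const x).prodMk differentiableAt_id); exact h
  have hgsub : ∀ (x : Fin d → ℝ) (t : ℝ),
      gradx (fun z s => u z s - v z s) x t = gradx u x t - gradx v x t := by
    intro x t
    funext i
    show fderiv ℝ (fun z => u z t - v z t) x (Pi.single i 1) = _
    rw [fderiv_fun_sub (hxu t x) (hxv t x)]
    simp [gradx]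
  have htsub : ∀ (x : Fin d → ℝ) (t : ℝ),
      tderiv (fun z s => u z s - v z s) x t = tderiv u x t - tderiv v x t := by
    intro x t
    exact deriv_sub (htu x t) (htv x t)
  -- the flux residual identity (holds everywhere)
  have hRd : ∀ (x : Fin d → ℝ) (t : ℝ),
      Rd A v (fun z s => (A z).mulVec (gradx u z s)) x t
        = (A x).mulVec (gradx (fun z s => u z s - v z s) x t) := by
    intro x t
    show (A x).mulVec (gradx u x t) - (A x).mulVec (gradx v x t) = _
    rw [hgsub, Matrix.mulVec_sub]
  -- the equation residual identity on the cylinder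
  have hReq : ∀ x ∈ box a₀ a₁, ∀ t ∈ Set.Ioo 0 T,
      Req σ bb c f v (fun z s => (A z).mulVec (gradx u z s)) x t
        = σ * tderiv (fun z s => u z s - v z s) x t + c x * (u x t - v x t)
          + bb x ⬝ᵥ gradx (fun z s => u z s - v z s) x t := by
    intro x hx t ht
    have hp := hpde x hx t ht
    unfold Req
    rw [hgsub, htsub, dotProduct_sub]
    have hbu : bb x ⬝ᵥ gradx u x t = bb x ⬝ᵥ gradx u x t := rfl
    nlinarith [hp]
  -- invertibility of A on the box
  have hinv : ∀ x ∈ box a₀ a₁, IsUnit (A x).det := by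
    intro x hx
    rw [← Matrix.isUnit_iff_isUnit_det, ← Matrix.mulVec_injective_iff_isUnit]
    have hker : ∀ g : Fin d → ℝ, (A x).mulVec g = 0 → g = 0 := by
      intro g hg
      have h1 := (hAell x hx g).1
      rw [hg] at h1
      simp only [zero_dotProduct] at h1
      have h2 : (0:ℝ) ≤ g ⬝ᵥ g := Finset.sum_nonneg fun i _ => mul_self_nonneg _
      have h3 : g ⬝ᵥ g = 0 := le_antisymm (by nlinarith) h2
      funext i
      have h4 := (Finset.sum_eq_zero_iff_of_nonneg
        (fun j (_ : j ∈ Finset.univ) => mul_self_nonneg (g j))).1 h3 i (Finset.mem_univ i)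
      simpa [mul_self_eq_zero] using h4
    intro g₁ g₂ h
    have : g₁ - g₂ = 0 := hker _ (by rw [Matrix.mulVec_sub, h, sub_self])
    exact sub_eq_zero.mp this
  -- the pointwise inner-product identity for the flux term
  have hRdip : ∀ x ∈ box a₀ a₁, ∀ t : ℝ,
      (A x)⁻¹.mulVec (Rd A v (fun z s => (A z).mulVec (gradx u z s)) x t)
          ⬝ᵥ Rd A v (fun z s => (A z).mulVec (gradx u z s)) x t
        = (A x).mulVec (gradx (fun z s => u z s - v z s) x t)
            ⬝ᵥ gradx (fun z s => u z s - v z s) x t := by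
    intro x hx t
    rw [hRd, Matrix.mulVec_mulVec, Matrix.nonsing_inv_mul _ (hinv x hx), Matrix.one_mulVec,
      dotProduct_comm]
  have hmeas : MeasurableSet (box a₀ a₁) := by
    have hbe : box a₀ a₁ = Set.pi Set.univ fun i => Set.Ioo (a₀ i) (a₁ i) := by
      ext x; simp [box, Set.mem_pi]
    rw [hbe]
    exact MeasurableSet.univ_pi fun i => measurableSet_Ioo
  refine ⟨fun x hx t ht => ⟨hRd x t, hReq x hx t ht⟩, ?_⟩
  intro α₁ α₂ hα₁ hα₂ hsum
  unfold Maj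
  have h0 : (∫ x in box a₀ a₁, (u₀ x - v x 0) ^ 2) = 0 := by
    rw [setIntegral_congr_fun hmeas (g := fun _ => (0:ℝ))
      (fun x hx => by rw [hvIC x hx]; ring)]
    exact integral_zero _ _
  rw [h0, mul_zero, zero_add]
  apply intervalIntegral.integral_congr_ae
  have hT' : ∀ᵐ t : ℝ, t ≠ T := by
    rw [ae_iff]
    simp [Real.volume_singleton]
  filter_upwards [hT'] with t htT ht
  rw [Set.uIoc_of_le hT.le] at ht
  have ht' : t ∈ Set.Ioo 0 T := ⟨ht.1, lt_of_le_of_ne ht.2 htT⟩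
  have e1 : (∫ x in box a₀ a₁,
      ((fun _ : Fin d → ℝ => (0:ℝ)) x
          * Req σ bb c f v (fun z s => (A z).mulVec (gradx u z s)) x t) ^ 2
        / (c x - (1 / 2) * divv bb x)) = 0 := by
    simp
  have e2 : (∫ x in box a₀ a₁,
        (A x)⁻¹.mulVec (Rd A v (fun z s => (A z).mulVec (gradx u z s)) x t)
          ⬝ᵥ Rd A v (fun z s => (A z).mulVec (gradx u z s)) x t)
      = ∫ x in box a₀ a₁,
          (A x).mulVec (gradx (fun z s => u z s - v z s) x t)
            ⬝ᵥ gradx (fun z s => u z s - v z s) x t :=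
    setIntegral_congr_fun hmeas fun x hx => hRdip x hx t
  have e3 : (∫ x in box a₀ a₁,
        ((1 - (fun _ : Fin d → ℝ => (0:ℝ)) x)
            * Req σ bb c f v (fun z s => (A z).mulVec (gradx u z s)) x t) ^ 2)
      = ∫ x in box a₀ a₁,
          (σ * tderiv (fun z s => u z s - v z s) x t + c x * (u x t - v x t)
            + bb x ⬝ᵥ gradx (fun z s => u z s - v z s) x t) ^ 2 :=
    setIntegral_congr_fun hmeas fun x hx => by
      rw [hReq x hx t ht']; ring
  rw [e1, e2, e3]
  ring
end
end
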